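/- arXiv:1106.2409 — 5 statements merged into one kernel-verified Lean document; each statement's English description precedes it below -/
import Mathlib

section
/- For all real x with -1 ≤ x ≤ 1, the binary entropy satisfies 1 - h((1+x)/2) ≤ x², where h(t) = -t·log₂(t) - (1-t)·log₂(1-t) (with h(0)=h(1)=0). -/
open Real Filter Finset Topology

/-- Binary Shannon entropy in bits; `Real.logb 2 0 = 0` so `binEnt 0 = binEnt 1 = 0`. -/
noncomputable def binEnt (t : ℝ) : ℝ := -(t * Real.logb 2 t) - (1 - t) * Real.logb 2 (1 - t)

private noncomputable def aux (k : ℕ) : ℝ := 1 / (((k : ℝ) + 1) * (2 * (k : ℝ) + 1))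

private lemma aux_nonneg (k : ℕ) : 0 ≤ aux k := by unfold aux; positivity

private lemma summable_aux : Summable aux := by
  have h2 : Summable (fun k : ℕ => 1 / ((k : ℝ) + 1) ^ 2) := by
    have := (summable_nat_add_iff (f := fun n : ℕ => 1 / (n : ℝ) ^ 2) 1).mpr
      (Real.summable_one_div_nat_pow.mpr one_lt_two)
    simpa using this
  refine Summable.of_nonneg_of_le aux_nonneg (fun k => ?_) h2
  unfold aux
  exact one_div_le_one_div_of_le (by positivity) (by nlinarith [k.cast_nonneg (α := ℝ)])

/-- series expansion of `(1+x)log(1+x) + (1-x)log(1-x)`. -/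
private lemma hasSum_f {x : ℝ} (hx : |x| < 1) :
    HasSum (fun k : ℕ => x ^ (2 * k + 2) * aux k)
      ((1 + x) * Real.log (1 + x) + (1 - x) * Real.log (1 - x)) := by
  have hx1 : (0 : ℝ) < 1 + x := by cases' abs_lt.mp hx with h _; linarith
  have hx2 : (0 : ℝ) < 1 - x := by cases' abs_lt.mp hx with _ h; linarith
  have hsq : |x ^ 2| < 1 := by
    rw [abs_of_nonneg (sq_nonneg x)]
    nlinarith [abs_lt.mp hx]
  have h1 := Real.hasSum_pow_div_log_of_abs_lt_one hsq
  have h2 := Real.hasSum_log_sub_log_of_abs_lt_one hx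
  have h3 := (h2.mul_left x).add (h1.mul_left (-1))
  have hlog : (1 : ℝ) - x ^ 2 = (1 + x) * (1 - x) := by ring
  rw [hlog, Real.log_mul (ne_of_gt hx1) (ne_of_gt hx2)] at h3
  convert h3 using 1
  · rfl
  · funext k
    unfold aux
    have hk1 : ((k : ℝ) + 1) ≠ 0 := by positivity
    have hk2 : (2 * (k : ℝ) + 1) ≠ 0 := by positivity
    have hpow : (x ^ 2) ^ (k + 1) = x ^ (2 * k + 2) := by ring
    rw [hpow]
    field_simp
    ring
  · ring

/-- elementary upper bound `(1+y)log(1+y)+(1-y)log(1-y) ≤ 2 log 2`. -/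
private lemma f_le {y : ℝ} (h1 : -1 < y) (h2 : y < 1) :
    (1 + y) * Real.log (1 + y) + (1 - y) * Real.log (1 - y) ≤ 2 * Real.log 2 := by
  have hy1 : (0 : ℝ) < 1 + y := by linarith
  have hy2 : (0 : ℝ) < 1 - y := by linarith
  have l1 : Real.log ((1 + y) / 2) ≤ (1 + y) / 2 - 1 :=
    Real.log_le_sub_one_of_pos (by positivity)
  have l2 : Real.log ((1 - y) / 2) ≤ (1 - y) / 2 - 1 :=
    Real.log_le_sub_one_of_pos (by positivity)
  rw [Real.log_div (ne_of_gt hy1) two_ne_zero] at l1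
  rw [Real.log_div (ne_of_gt hy2) two_ne_zero] at l2
  nlinarith [l1, l2]

private lemma tsum_aux_le : ∑' k, aux k ≤ 2 * Real.log 2 := by
  refine Summable.tsum_le_of_sum_le summable_aux (fun s => ?_)
  have hT : Tendsto (fun y : ℝ => ∑ k ∈ s, y ^ (2 * k + 2) * aux k)
      (nhdsWithin 1 (Set.Iio 1)) (𝓝 (∑ k ∈ s, (1 : ℝ) ^ (2 * k + 2) * aux k)) := by
    apply Filter.Tendsto.mono_left _ nhdsWithin_le_nhds
    exact Continuous.tendsto (by continuity) 1
  have hval : (∑ k ∈ s, (1 : ℝ) ^ (2 * k + 2) * aux k) = ∑ k ∈ s, aux k := by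
    simp
  rw [hval] at hT
  refine le_of_tendsto hT ?_
  filter_upwards [Ioo_mem_nhdsLT_of_mem (by norm_num : (1 : ℝ) ∈ Set.Ioc 0 1)] with y hy
  obtain ⟨hy0, hy1⟩ := hy
  have habs : |y| < 1 := abs_lt.mpr ⟨by linarith, hy1⟩
  calc ∑ k ∈ s, y ^ (2 * k + 2) * aux k
      ≤ (1 + y) * Real.log (1 + y) + (1 - y) * Real.log (1 - y) := by
        refine sum_le_hasSum s (fun k _ => ?_) (hasSum_f habs)
        have := aux_nonneg k
        positivity
    _ ≤ 2 * Real.log 2 := f_le (by linarith) hy1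

theorem stmt_0 (x : ℝ) (h1 : -1 ≤ x) (h2 : x ≤ 1) :
    1 - binEnt ((1 + x) / 2) ≤ x ^ 2 := by
  rcases eq_or_lt_of_le h2 with rfl | hlt
  · norm_num [binEnt, Real.logb]
  rcases eq_or_lt_of_le h1 with rfl | hgt
  · norm_num [binEnt, Real.logb]
  have habs : |x| < 1 := abs_lt.mpr ⟨hgt, hlt⟩
  have hx1 : (0 : ℝ) < 1 + x := by linarith
  have hx2 : (0 : ℝ) < 1 - x := by linarith
  have hlog2 : (0 : ℝ) < Real.log 2 := Real.log_pos (by norm_num)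
  set L := (1 + x) * Real.log (1 + x) + (1 - x) * Real.log (1 - x) with hL
  -- key: 1 - binEnt ((1+x)/2) = L / (2 * log 2)
  have hbin : 1 - binEnt ((1 + x) / 2) = L / (2 * Real.log 2) := by
    have e1 : Real.logb 2 ((1 + x) / 2) = (Real.log (1 + x) - Real.log 2) / Real.log 2 := by
      rw [Real.logb, Real.log_div (ne_of_gt hx1) two_ne_zero]
    have e2 : (1 : ℝ) - (1 + x) / 2 = (1 - x) / 2 := by ring
    have e3 : Real.logb 2 ((1 - x) / 2) = (Real.log (1 - x) - Real.log 2) / Real.log 2 := by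
      rw [Real.logb, Real.log_div (ne_of_gt hx2) two_ne_zero]
    rw [binEnt, e2, e1, e3, hL]
    field_simp
    ring
  rw [hbin, div_le_iff₀ (by positivity)]
  -- now show L ≤ x ^ 2 * (2 * log 2)
  have hsum := hasSum_f habs
  have hLeq : L = ∑' k, x ^ (2 * k + 2) * aux k := hsum.tsum_eq.symm
  rw [hLeq]
  have hterm : ∀ k : ℕ, x ^ (2 * k + 2) * aux k ≤ x ^ 2 * aux k := by
    intro k
    have h0 : (0 : ℝ) ≤ x ^ 2 := sq_nonneg x
    have h1' : x ^ 2 ≤ 1 := by nlinarith [abs_lt.mp habs]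
    have hrw : x ^ (2 * k + 2) = (x ^ 2) ^ (k + 1) := by ring
    rw [hrw]
    have hle : (x ^ 2) ^ (k + 1) ≤ x ^ 2 := by
      calc (x ^ 2) ^ (k + 1) ≤ (x ^ 2) ^ 1 := pow_le_pow_of_le_one h0 h1' (by omega)
        _ = x ^ 2 := pow_one _
    exact mul_le_mul_of_nonneg_right hle (aux_nonneg k)
  calc (∑' k, x ^ (2 * k + 2) * aux k)
      ≤ ∑' k, x ^ 2 * aux k :=
        Summable.tsum_le_tsum hterm hsum.summable (summable_aux.mul_left _)
    _ = x ^ 2 * ∑' k, aux k := tsum_mul_left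
    _ ≤ x ^ 2 * (2 * Real.log 2) :=
        mul_le_mul_of_nonneg_left tsum_aux_le (sq_nonneg x)
end

section
/- For all real x with -1 < x < 1, the following series identity holds: 1 - h((1+x)/2) = ∑_{n=1}^∞ x^(2n) / (2n(2n-1)·ln 2), where h is the binary entropy in bits. -/
theorem stmt_1 (x : ℝ) (h1 : -1 < x) (h2 : x < 1) :
    1 - binEnt ((1 + x) / 2)
      = ∑' n : ℕ, x ^ (2 * (n + 1)) /
          ((2 * ((n : ℝ) + 1)) * (2 * ((n : ℝ) + 1) - 1) * Real.log 2) := by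
  have hx : |x| < 1 := abs_lt.2 ⟨h1, h2⟩
  have hx' : |(-x)| < 1 := by rwa [abs_neg]
  set S : ℝ := (1 + x) * Real.log (1 + x) + (1 - x) * Real.log (1 - x) with hS
  set term : ℕ → ℝ := fun n =>
    -(1 + x) * ((-x) ^ (n + 1) / ((n : ℝ) + 1)) + -(1 - x) * (x ^ (n + 1) / ((n : ℝ) + 1))
    with hterm
  have hsum : HasSum term S := by
    have h1' := (Real.hasSum_pow_div_log_of_abs_lt_one hx').mul_left (-(1 + x))
    have h2' := (Real.hasSum_pow_div_log_of_abs_lt_one hx).mul_left (-(1 - x))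
    have h3 := h1'.add h2'
    simp only [sub_neg_eq_add] at h3
    rw [show S = -(1 + x) * -Real.log (1 + x) + -(1 - x) * -Real.log (1 - x) by rw [hS]; ring]
    exact h3
  have hinj1 : Function.Injective (fun k : ℕ => 2 * k) := fun a b h => by simpa using h
  have hinj2 : Function.Injective (fun k : ℕ => 2 * k + 1) := fun a b h => by simpa using h
  have he : Summable (fun k => term (2 * k)) := by
    have := hsum.summable.comp_injective hinj1
    exact this
  have ho : Summable (fun k => term (2 * k + 1)) := by
    have := hsum.summable.comp_injective hinj2
    exact this
  have heo : HasSum term ((∑' k, term (2 * k)) + ∑' k, term (2 * k + 1)) :=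
    he.hasSum.even_add_odd ho.hasSum
  have hES : (∑' k, term (2 * k)) + (∑' k, term (2 * k + 1)) = S := heo.unique hsum
  have hb : HasSum (fun k => term (2 * k) + term (2 * k + 1)) S := by
    rw [← hES]; exact he.hasSum.add ho.hasSum
  have hlog2 : Real.log 2 ≠ 0 := by
    have := Real.log_pos (by norm_num : (1:ℝ) < 2); linarith
  have ha : HasSum (fun n : ℕ => x ^ (2 * (n + 1)) /
      ((2 * ((n : ℝ) + 1)) * (2 * ((n : ℝ) + 1) - 1) * Real.log 2)) (S / (2 * Real.log 2)) := by
    have := hb.div_const (2 * Real.log 2)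
    convert this using 2 with k
    · rfl
    have hodd : ((-x) ^ (2 * k + 1) : ℝ) = -(x ^ (2 * k + 1)) :=
      Odd.neg_pow ⟨k, by ring⟩ x
    have heven : ((-x) ^ (2 * k + 1 + 1) : ℝ) = x ^ (2 * k + 1 + 1) :=
      Even.neg_pow ⟨k + 1, by ring⟩ x
    simp only [hterm]
    push_cast
    rw [hodd, heven]
    have hk1 : ((2 * k : ℝ) + 1) ≠ 0 := by positivity
    have hk2 : ((2 * k : ℝ) + 1 + 1) ≠ 0 := by positivity
    have hk3 : (2 * ((k : ℝ) + 1)) * (2 * ((k : ℝ) + 1) - 1) * Real.log 2 ≠ 0 := by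
      apply mul_ne_zero (mul_ne_zero (by positivity) (by nlinarith [Nat.cast_nonneg (α := ℝ) k])) hlog2
    field_simp
    have hk1' : (1 + (k : ℝ) * 2) ≠ 0 := by positivity
    ring_nf
    field_simp
    ring
  rw [ha.tsum_eq]
  -- now show 1 - binEnt ((1+x)/2) = S / (2 * log 2)
  have hp : (0:ℝ) < 1 + x := by linarith
  have hq : (0:ℝ) < 1 - x := by linarith
  rw [binEnt, Real.logb, Real.logb]
  have e1 : Real.log ((1 + x) / 2) = Real.log (1 + x) - Real.log 2 :=
    Real.log_div (by positivity) two_ne_zero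
  have e2 : (1 : ℝ) - (1 + x) / 2 = (1 - x) / 2 := by ring
  rw [e2]
  have e3 : Real.log ((1 - x) / 2) = Real.log (1 - x) - Real.log 2 :=
    Real.log_div (by positivity) two_ne_zero
  rw [e1, e3, hS]
  field_simp
  ring
end

section
/- Let F be a 2ⁿ×2ⁿ ±1 matrix with orthogonal rows, p a probability distribution, h_j vectors with ‖h_j‖ ≤ 1, x_i = ∑_j f_{i,j} p_j h_j, and for each i let w_i be a unit vector. Then ∑_i ⟨w_i, x_i⟩² ≤ 2ⁿ ∑_j p_j² ‖h_j‖². -/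
open RealInnerProductSpace Matrix

theorem stmt_5 {V : Type*} [NormedAddCommGroup V] [InnerProductSpace ℝ V]
    (n : ℕ) (F : Fin (2 ^ n) → Fin (2 ^ n) → ℝ)
    (hpm : ∀ i j, F i j = 1 ∨ F i j = -1)
    (hrows : ∀ i i', ∑ j, F i j * F i' j = if i = i' then ((2 : ℝ) ^ n) else 0)
    (p : Fin (2 ^ n) → ℝ) (hp0 : ∀ j, 0 ≤ p j) (hp1 : ∑ j, p j = 1)
    (h : Fin (2 ^ n) → V) (hh : ∀ j, ‖h j‖ ≤ 1)
    (w : Fin (2 ^ n) → V) (hw : ∀ i, ‖w i‖ = 1) :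
    ∑ i, ⟪w i, ∑ j, (F i j * p j) • h j⟫ ^ 2
      ≤ (2 : ℝ) ^ n * ∑ j, (p j) ^ 2 * ‖h j‖ ^ 2 := by
  -- column orthogonality
  set M : Matrix (Fin (2 ^ n)) (Fin (2 ^ n)) ℝ := Matrix.of F with hM
  have hc : ((2 : ℝ) ^ n) ≠ 0 := by positivity
  have hMMT : M * Mᵀ = ((2 : ℝ) ^ n) • 1 := by
    ext i i'
    simp only [Matrix.mul_apply, Matrix.transpose_apply, Matrix.smul_apply, Matrix.one_apply,
      hM, Matrix.of_apply, smul_eq_mul]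
    rw [hrows i i']
    by_cases hii : i = i' <;> simp [hii]
  have h1 : M * (((2 : ℝ) ^ n)⁻¹ • Mᵀ) = 1 := by
    rw [Matrix.mul_smul, hMMT, smul_smul, inv_mul_cancel₀ hc, one_smul]
  have h2 : (((2 : ℝ) ^ n)⁻¹ • Mᵀ) * M = 1 := mul_eq_one_comm.mp h1
  have hMTM : Mᵀ * M = ((2 : ℝ) ^ n) • 1 := by
    have := congrArg (fun A => ((2 : ℝ) ^ n) • A) h2
    simpa [Matrix.smul_mul, smul_smul, mul_inv_cancel₀ hc] using this
  have hcol : ∀ j j', ∑ i, F i j * F i j' = if j = j' then ((2 : ℝ) ^ n) else 0 := by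
    intro j j'
    have := congrFun (congrFun hMTM j) j'
    simp only [Matrix.mul_apply, Matrix.transpose_apply, Matrix.smul_apply, Matrix.one_apply,
      hM, Matrix.of_apply, smul_eq_mul] at this
    rw [this]
    by_cases hjj : j = j' <;> simp [hjj]
  -- Cauchy–Schwarz step
  have step1 : ∀ i, ⟪w i, ∑ j, (F i j * p j) • h j⟫ ^ 2 ≤ ‖∑ j, (F i j * p j) • h j‖ ^ 2 := by
    intro i
    have := abs_real_inner_le_norm (w i) (∑ j, (F i j * p j) • h j)
    rw [hw i, one_mul] at this
    calc ⟪w i, ∑ j, (F i j * p j) • h j⟫ ^ 2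
        = |⟪w i, ∑ j, (F i j * p j) • h j⟫| ^ 2 := (sq_abs _).symm
      _ ≤ ‖∑ j, (F i j * p j) • h j‖ ^ 2 := by
          exact pow_le_pow_left₀ (abs_nonneg _) this 2
  have key : ∀ i, ‖∑ j, (F i j * p j) • h j‖ ^ 2
      = ∑ j, ∑ k, (F i j * F i k) * (p j * p k * ⟪h j, h k⟫) := by
    intro i
    rw [← real_inner_self_eq_norm_sq, inner_sum]
    refine Finset.sum_congr rfl fun k _ => ?_
    rw [real_inner_smul_right, sum_inner]
    rw [Finset.mul_sum]
    refine Finset.sum_congr rfl fun j _ => ?_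
    rw [real_inner_smul_left, real_inner_comm (h j) (h k)]
    ring
  calc ∑ i, ⟪w i, ∑ j, (F i j * p j) • h j⟫ ^ 2
      ≤ ∑ i, ‖∑ j, (F i j * p j) • h j‖ ^ 2 := Finset.sum_le_sum fun i _ => step1 i
    _ = ∑ j, ∑ k, (∑ i, F i j * F i k) * (p j * p k * ⟪h j, h k⟫) := by
        simp only [key]
        rw [Finset.sum_comm]
        refine Finset.sum_congr rfl fun j _ => ?_
        rw [Finset.sum_comm]
        refine Finset.sum_congr rfl fun k _ => ?_
        rw [Finset.sum_mul]
    _ = (2 : ℝ) ^ n * ∑ j, (p j) ^ 2 * ‖h j‖ ^ 2 := by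
        rw [Finset.mul_sum]
        refine Finset.sum_congr rfl fun j _ => ?_
        rw [Finset.sum_eq_single j]
        · rw [hcol j j, if_pos rfl, real_inner_self_eq_norm_sq]
          ring
        · intro k _ hk
          rw [hcol j k, if_neg (Ne.symm hk), zero_mul]
        · intro hj; exact absurd (Finset.mem_univ j) hj
end

section
/- With uniform distribution p_j = 2⁻ⁿ and unit-length vectors h_j, and x_avg = 2⁻ⁿ ∑_j h_j, we have ∑_{i=2}^{2ⁿ} ‖x_i‖² = 1 - ‖x_avg‖², where x_i = 2⁻ⁿ ∑_j f_{i,j} h_j for a ±1 matrix F with orthogonal rows whose first row is all ones. -/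
open Finset Matrix

theorem stmt_7 {V : Type*} [NormedAddCommGroup V] [InnerProductSpace ℝ V]
    (n : ℕ) (F : Fin (2 ^ n) → Fin (2 ^ n) → ℝ)
    (hpm : ∀ i j, F i j = 1 ∨ F i j = -1)
    (hrows : ∀ i i', ∑ j, F i j * F i' j = if i = i' then ((2 : ℝ) ^ n) else 0)
    (hfirst : ∀ j, F ⟨0, Nat.pow_pos (by norm_num)⟩ j = 1)
    (h : Fin (2 ^ n) → V) (hh : ∀ j, ‖h j‖ = 1) :
    ∑ i ∈ Finset.univ \ {⟨0, Nat.pow_pos (by norm_num)⟩},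
        ‖((2 : ℝ)⁻¹ ^ n) • ∑ j, F i j • h j‖ ^ 2
      = 1 - ‖((2 : ℝ)⁻¹ ^ n) • ∑ j, h j‖ ^ 2 := by
  set i0 : Fin (2 ^ n) := ⟨0, Nat.pow_pos (by norm_num)⟩ with hi0
  have hc : ((2:ℝ) ^ n) ≠ 0 := by positivity
  -- column orthogonality
  have hcol : ∀ j k, ∑ i, F i j * F i k = if j = k then ((2:ℝ) ^ n) else 0 := by
    have h1 : (Matrix.of F) * (((2:ℝ)^n)⁻¹ • (Matrix.of F)ᵀ) = 1 := by
      ext i i'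
      simp only [Matrix.mul_apply, Matrix.smul_apply, Matrix.transpose_apply, Matrix.of_apply,
        smul_eq_mul, Matrix.one_apply]
      rw [show (∑ j, F i j * (((2:ℝ)^n)⁻¹ * F i' j)) = ((2:ℝ)^n)⁻¹ * ∑ j, F i j * F i' j by
        rw [Finset.mul_sum]; exact Finset.sum_congr rfl (fun j _ => by ring), hrows]
      split <;> field_simp <;> ring
    have h2 := mul_eq_one_comm.mp h1
    intro j k
    have h3 := congrFun (congrFun h2 j) k
    simp only [Matrix.mul_apply, Matrix.smul_apply, Matrix.transpose_apply, Matrix.of_apply,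
      smul_eq_mul, Matrix.one_apply] at h3
    have h4 : ∑ i, F i j * F i k = (2:ℝ)^n * ∑ i, ((2:ℝ)^n)⁻¹ * F i j * F i k := by
      rw [Finset.mul_sum]
      exact Finset.sum_congr rfl fun i _ => by
        rw [← mul_assoc, ← mul_assoc, mul_inv_cancel₀ hc, one_mul]
    rw [h4, h3]
    split <;> ring
  have hterm : ∀ i : Fin (2^n), ‖((2:ℝ)⁻¹ ^ n) • ∑ j, F i j • h j‖ ^ 2
      = (((2:ℝ)^n)⁻¹)^2 * ∑ j, ∑ k, F i j * F i k * (inner ℝ (h j) (h k) : ℝ) := by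
    intro i
    rw [norm_smul, mul_pow, Real.norm_eq_abs,
      abs_of_pos (by positivity : (0:ℝ) < (2:ℝ)⁻¹ ^ n), inv_pow]
    congr 1
    rw [← real_inner_self_eq_norm_sq, sum_inner]
    refine Finset.sum_congr rfl fun j _ => ?_
    rw [inner_sum]
    refine Finset.sum_congr rfl fun k _ => ?_
    rw [real_inner_smul_left, real_inner_smul_right]; ring
  have hall : ∑ i, ‖((2:ℝ)⁻¹ ^ n) • ∑ j, F i j • h j‖ ^ 2 = 1 := by
    rw [Finset.sum_congr rfl fun i _ => hterm i, ← Finset.mul_sum]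
    rw [Finset.sum_comm]
    have : ∀ j : Fin (2^n), ∑ i, ∑ k, F i j * F i k * (inner ℝ (h j) (h k) : ℝ)
        = (2:ℝ)^n := by
      intro j
      rw [Finset.sum_comm]
      have : ∀ k : Fin (2^n), ∑ i, F i j * F i k * (inner ℝ (h j) (h k) : ℝ)
          = (if j = k then ((2:ℝ)^n) else 0) * (inner ℝ (h j) (h k) : ℝ) := by
        intro k
        rw [← hcol j k, Finset.sum_mul]
      rw [Finset.sum_congr rfl fun k _ => this k]
      rw [Finset.sum_eq_single j]
      · rw [if_pos rfl, real_inner_self_eq_norm_sq, hh j]; ring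
      · intro k _ hk; rw [if_neg (Ne.symm hk), zero_mul]
      · intro hj; exact absurd (Finset.mem_univ j) hj
    rw [Finset.sum_congr rfl fun j _ => this j, Finset.sum_const, Finset.card_univ,
      Fintype.card_fin, nsmul_eq_mul]
    field_simp
    norm_num
  rw [Finset.sum_sdiff_eq_sub (Finset.subset_univ _), hall, Finset.sum_singleton]
  have h0 : ∑ j, F i0 j • h j = ∑ j, h j :=
    Finset.sum_congr rfl fun j _ => by rw [hfirst j, one_smul]
  rw [h0]
end

section
/- For a probability distribution p on Fin 2ⁿ, a ±1 matrix F with orthogonal rows, and vectors h_j with ‖h_j‖ ≤ 1, if the three queries correspond to rows giving biases E₁, E₂, E₃ (with n such that 2ⁿ ≥ 4, uniform p and unit h_j restricted to a 3-row sub-collection with the all-ones row excluded), then E₁² + E₂² + E₃² ≤ 1. Concretely: for unit vectors h_1,...,h_4 in a real inner product space and the three vectors x_i = (1/4)∑_j f_{i,j} h_j for i=2,3,4 where F is the 4×4 Hadamard matrix, ∑_{i=2}^4 ‖x_i‖² ≤ 1. -/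
/-- The 4×4 Hadamard matrix. -/
def H4 : Fin 4 → Fin 4 → ℝ :=
  ![![1, 1, 1, 1], ![1, -1, 1, -1], ![1, 1, -1, -1], ![1, -1, -1, 1]]

theorem stmt_17 {V : Type*} [NormedAddCommGroup V] [InnerProductSpace ℝ V]
    (h : Fin 4 → V) (hh : ∀ j, ‖h j‖ ≤ 1) :
    ∑ i ∈ ({1, 2, 3} : Finset (Fin 4)), ‖(1 / 4 : ℝ) • ∑ j, H4 i j • h j‖ ^ 2 ≤ 1 := by
  simp only [show ({1,2,3} : Finset (Fin 4)) = {1} ∪ {2} ∪ {3} by rfl]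
  rw [Finset.sum_union (by decide), Finset.sum_union (by decide)]
  simp only [Finset.sum_singleton, Fin.sum_univ_four,
    show H4 1 0 = 1 from rfl, show H4 1 1 = -1 from rfl, show H4 1 2 = 1 from rfl,
    show H4 1 3 = -1 from rfl, show H4 2 0 = 1 from rfl, show H4 2 1 = 1 from rfl,
    show H4 2 2 = -1 from rfl, show H4 2 3 = -1 from rfl, show H4 3 0 = 1 from rfl,
    show H4 3 1 = -1 from rfl, show H4 3 2 = -1 from rfl, show H4 3 3 = 1 from rfl,
    one_smul, neg_one_smul]
  have e : ∀ v : V, ‖(1/4:ℝ) • v‖ ^ 2 = (1/16) * (inner ℝ v v : ℝ) := by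
    intro v
    rw [norm_smul, mul_pow, real_inner_self_eq_norm_sq]
    norm_num
  rw [e, e, e]
  have hb : ∀ j : Fin 4, (inner ℝ (h j) (h j) : ℝ) ≤ 1 := by
    intro j
    rw [real_inner_self_eq_norm_sq]
    nlinarith [hh j, norm_nonneg (h j)]
  have hpos : (0:ℝ) ≤ inner ℝ (h 0 + h 1 + h 2 + h 3) (h 0 + h 1 + h 2 + h 3) :=
    real_inner_self_nonneg
  simp only [inner_add_left, inner_add_right, inner_neg_left, inner_neg_right] at hpos ⊢
  have c01 := real_inner_comm (h 0) (h 1)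
  have c02 := real_inner_comm (h 0) (h 2)
  have c03 := real_inner_comm (h 0) (h 3)
  have c12 := real_inner_comm (h 1) (h 2)
  have c13 := real_inner_comm (h 1) (h 3)
  have c23 := real_inner_comm (h 2) (h 3)
  nlinarith [hb 0, hb 1, hb 2, hb 3, hpos]
end
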